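/- Let κ ≥ 1, let A be an N×N invertible Hermitian complex matrix all of whose eigenvalues lie in D_κ := [−1, −1/κ] ∪ [1/κ, 1], let ε′ be a real number with 0 < ε′ < 1/(2κ), and let g : ℝ → ℝ satisfy |g(λ) − 1/(2κλ)| ≤ ε′ for every eigenvalue λ of A. Then for every b ∈ ℂ^N with ‖b‖ = 1, the vector g(A)·b is nonzero and ‖A⁻¹b/‖A⁻¹b‖ − g(A)·b/‖g(A)·b‖‖ ≤ 4κε′, where g(A) is defined by applying g to the eigenvalues of A via the spectral decomposition. -/

import Mathlib

open Matrix
open scoped ComplexInnerProductSpace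

section Aux

variable {N : ℕ}

lemma aux_norm_unitary (U : Matrix (Fin N) (Fin N) ℂ)
    (hU : U ∈ Matrix.unitaryGroup (Fin N) ℂ) (x : EuclideanSpace ℂ (Fin N)) :
    ‖Matrix.toEuclideanLin U x‖ = ‖x‖ := by
  have h1 : Uᴴ * U = 1 := Matrix.mem_unitaryGroup_iff'.mp hU
  have key : Matrix.toEuclideanLin Uᴴ (Matrix.toEuclideanLin U x) = x := by
    rw [Matrix.toEuclideanLin_apply, Matrix.toEuclideanLin_apply]
    simp [Matrix.mulVec_mulVec, h1]
  have h2 : (⟪Matrix.toEuclideanLin U x, Matrix.toEuclideanLin U x⟫) = ⟪x, x⟫ := by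
    conv_lhs => rw [← LinearMap.adjoint_inner_left]
    rw [← Matrix.toEuclideanLin_conjTranspose_eq_adjoint, key]
  have h3 := congrArg (RCLike.re (K := ℂ)) h2
  rw [inner_self_eq_norm_sq, inner_self_eq_norm_sq] at h3
  exact (pow_left_inj₀ (by positivity) (by positivity) two_ne_zero).mp h3

lemma aux_coord (M : Matrix (Fin N) (Fin N) ℂ) (v : EuclideanSpace ℂ (Fin N)) (i : Fin N) :
    Matrix.toEuclideanLin M v i = M.mulVec (fun j => v j) i := by
  rw [Matrix.toEuclideanLin_apply]

lemma aux_norm_sq (v : EuclideanSpace ℂ (Fin N)) : ‖v‖ ^ 2 = ∑ i, ‖v i‖ ^ 2 := by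
  rw [EuclideanSpace.norm_eq, Real.sq_sqrt (by positivity)]

lemma aux_diag_lower (d : Fin N → ℂ) (v : EuclideanSpace ℂ (Fin N)) (m : ℝ) (hm0 : 0 ≤ m)
    (hm : ∀ i, m ≤ ‖d i‖) :
    m * ‖v‖ ≤ ‖Matrix.toEuclideanLin (Matrix.diagonal d) v‖ := by
  have h : (m * ‖v‖) ^ 2 ≤ ‖Matrix.toEuclideanLin (Matrix.diagonal d) v‖ ^ 2 := by
    rw [mul_pow, aux_norm_sq, aux_norm_sq, Finset.mul_sum]
    refine Finset.sum_le_sum fun i _ => ?_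
    rw [aux_coord, Matrix.mulVec_diagonal, norm_mul, mul_pow]
    have h1 : m ^ 2 ≤ ‖d i‖ ^ 2 := by nlinarith [hm i, norm_nonneg (d i)]
    exact mul_le_mul_of_nonneg_right h1 (by positivity)
  have h2 := Real.sqrt_le_sqrt h
  rwa [Real.sqrt_sq (by positivity), Real.sqrt_sq (by positivity)] at h2

lemma aux_diag_upper (d : Fin N → ℂ) (v : EuclideanSpace ℂ (Fin N)) (M : ℝ) (hM0 : 0 ≤ M)
    (hM : ∀ i, ‖d i‖ ≤ M) :
    ‖Matrix.toEuclideanLin (Matrix.diagonal d) v‖ ≤ M * ‖v‖ := by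
  have h : ‖Matrix.toEuclideanLin (Matrix.diagonal d) v‖ ^ 2 ≤ (M * ‖v‖) ^ 2 := by
    rw [mul_pow, aux_norm_sq, aux_norm_sq, Finset.mul_sum]
    refine Finset.sum_le_sum fun i _ => ?_
    rw [aux_coord, Matrix.mulVec_diagonal, norm_mul, mul_pow]
    have h1 : ‖d i‖ ^ 2 ≤ M ^ 2 := by nlinarith [hM i, norm_nonneg (d i)]
    exact mul_le_mul_of_nonneg_right h1 (by positivity)
  have h2 := Real.sqrt_le_sqrt h
  rwa [Real.sqrt_sq (by positivity), Real.sqrt_sq (by positivity)] at h2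

lemma aux_conj_apply (U : Matrix (Fin N) (Fin N) ℂ) (d : Fin N → ℂ)
    (v : EuclideanSpace ℂ (Fin N)) :
    Matrix.toEuclideanLin (U * Matrix.diagonal d * star U) v =
      Matrix.toEuclideanLin U (Matrix.toEuclideanLin (Matrix.diagonal d)
        (Matrix.toEuclideanLin (star U) v)) := by
  simp only [Matrix.toEuclideanLin_apply, Equiv.apply_symm_apply, Matrix.mulVec_mulVec,
    mul_assoc]

lemma aux_conj_lower (U : Matrix (Fin N) (Fin N) ℂ)
    (hU : U ∈ Matrix.unitaryGroup (Fin N) ℂ) (d : Fin N → ℂ)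
    (v : EuclideanSpace ℂ (Fin N)) (m : ℝ) (hm0 : 0 ≤ m) (hm : ∀ i, m ≤ ‖d i‖) :
    m * ‖v‖ ≤ ‖Matrix.toEuclideanLin (U * Matrix.diagonal d * star U) v‖ := by
  rw [aux_conj_apply, aux_norm_unitary U hU]
  calc m * ‖v‖ = m * ‖Matrix.toEuclideanLin (star U) v‖ := by
        rw [aux_norm_unitary (star U) (Unitary.star_mem hU)]
    _ ≤ _ := aux_diag_lower d _ m hm0 hm

lemma aux_conj_upper (U : Matrix (Fin N) (Fin N) ℂ)
    (hU : U ∈ Matrix.unitaryGroup (Fin N) ℂ) (d : Fin N → ℂ)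
    (v : EuclideanSpace ℂ (Fin N)) (M : ℝ) (hM0 : 0 ≤ M) (hM : ∀ i, ‖d i‖ ≤ M) :
    ‖Matrix.toEuclideanLin (U * Matrix.diagonal d * star U) v‖ ≤ M * ‖v‖ := by
  rw [aux_conj_apply, aux_norm_unitary U hU]
  calc ‖_‖ ≤ M * ‖Matrix.toEuclideanLin (star U) v‖ := aux_diag_upper d _ M hM0 hM
    _ = M * ‖v‖ := by rw [aux_norm_unitary (star U) (Unitary.star_mem hU)]
lemma aux_normalize_sub (x y : EuclideanSpace ℂ (Fin N)) (hx : x ≠ 0) (hy : y ≠ 0) :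
    ‖(‖x‖ : ℂ)⁻¹ • x - (‖y‖ : ℂ)⁻¹ • y‖ ≤ 2 * ‖x - y‖ / ‖x‖ := by
  have ha : (0:ℝ) < ‖x‖ := norm_pos_iff.mpr hx
  have hb : (0:ℝ) < ‖y‖ := norm_pos_iff.mpr hy
  have hid : (‖x‖ : ℂ)⁻¹ • x - (‖y‖ : ℂ)⁻¹ • y
      = (‖x‖ : ℂ)⁻¹ • (x - y) + ((‖x‖ : ℂ)⁻¹ - (‖y‖ : ℂ)⁻¹) • y := by
    rw [smul_sub, sub_smul]; abel
  have hd : |‖y‖ - ‖x‖| ≤ ‖x - y‖ := by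
    rw [norm_sub_rev x y]; exact abs_norm_sub_norm_le y x
  have h1 : ‖(‖x‖ : ℂ)⁻¹ • (x - y)‖ = ‖x - y‖ / ‖x‖ := by
    rw [norm_smul, norm_inv, Complex.norm_real, Real.norm_eq_abs, abs_of_pos ha,
      inv_mul_eq_div]
  have h2 : ‖((‖x‖ : ℂ)⁻¹ - (‖y‖ : ℂ)⁻¹) • y‖ ≤ ‖x - y‖ / ‖x‖ := by
    rw [norm_smul]
    have hc : ((‖x‖ : ℂ)⁻¹ - (‖y‖ : ℂ)⁻¹) = ((‖x‖⁻¹ - ‖y‖⁻¹ : ℝ) : ℂ) := by push_cast; ring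
    rw [hc, Complex.norm_real, Real.norm_eq_abs]
    have he : ‖x‖⁻¹ - ‖y‖⁻¹ = (‖y‖ - ‖x‖) / (‖x‖ * ‖y‖) := by field_simp
    rw [he, abs_div, abs_of_pos (mul_pos ha hb)]
    calc |‖y‖ - ‖x‖| / (‖x‖ * ‖y‖) * ‖y‖ = |‖y‖ - ‖x‖| / ‖x‖ := by field_simp
      _ ≤ ‖x - y‖ / ‖x‖ := by apply div_le_div_of_nonneg_right hd ha.le
  calc ‖(‖x‖ : ℂ)⁻¹ • x - (‖y‖ : ℂ)⁻¹ • y‖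
      ≤ ‖(‖x‖ : ℂ)⁻¹ • (x - y)‖ + ‖((‖x‖ : ℂ)⁻¹ - (‖y‖ : ℂ)⁻¹) • y‖ := by
        rw [hid]; exact norm_add_le _ _
    _ ≤ ‖x - y‖ / ‖x‖ + ‖x - y‖ / ‖x‖ := by rw [h1]; linarith
    _ = 2 * ‖x - y‖ / ‖x‖ := by ring

lemma aux_conj_mul (U : Matrix (Fin N) (Fin N) ℂ)
    (hU : U ∈ Matrix.unitaryGroup (Fin N) ℂ) (d₁ d₂ : Fin N → ℂ) :
    (U * Matrix.diagonal d₁ * star U) * (U * Matrix.diagonal d₂ * star U)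
      = U * Matrix.diagonal (fun i => d₁ i * d₂ i) * star U := by
  have h1 : star U * U = 1 := hU.1
  have key : ∀ X : Matrix (Fin N) (Fin N) ℂ, star U * (U * X) = X := fun X => by
    rw [← mul_assoc, h1, one_mul]
  simp only [mul_assoc, key]
  rw [← mul_assoc (Matrix.diagonal d₁), Matrix.diagonal_mul_diagonal]

end Aux

/-- End accuracy guarantee of the QSVT-based quantum linear solver: if all
eigenvalues of an invertible Hermitian `A` lie in `D_κ = [−1, −1/κ] ∪ [1/κ, 1]`,
`0 < ε′ < 1/(2κ)` and `|g(λ) − 1/(2κλ)| ≤ ε′` on the spectrum of `A`, then for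
every unit vector `b` (Euclidean 2-norm), `g(A)b ≠ 0` and the normalized vectors
satisfy `‖A⁻¹b/‖A⁻¹b‖ − g(A)b/‖g(A)b‖‖ ≤ 4κε′`, where `g(A)` applies `g` to the
eigenvalues via the spectral decomposition. -/
theorem stmt_17 (N : ℕ) (κ : ℝ) (hκ : 1 ≤ κ)
    (A : Matrix (Fin N) (Fin N) ℂ) (hA : A.IsHermitian) (hdet : IsUnit A.det)
    (heig : ∀ i, hA.eigenvalues i ∈
      Set.Icc (-1 : ℝ) (-(1 / κ)) ∪ Set.Icc (1 / κ) 1)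
    (ε' : ℝ) (hε'0 : 0 < ε') (hε'1 : ε' < 1 / (2 * κ)) (g : ℝ → ℝ)
    (hg : ∀ i, |g (hA.eigenvalues i) - 1 / (2 * κ * hA.eigenvalues i)| ≤ ε')
    (b : EuclideanSpace ℂ (Fin N)) (hb : ‖b‖ = 1) :
    Matrix.toEuclideanLin (hA.cfc g) b ≠ 0 ∧
    ‖(‖Matrix.toEuclideanLin A⁻¹ b‖ : ℂ)⁻¹ • Matrix.toEuclideanLin A⁻¹ b
        - (‖Matrix.toEuclideanLin (hA.cfc g) b‖ : ℂ)⁻¹ •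
          Matrix.toEuclideanLin (hA.cfc g) b‖ ≤ 4 * κ * ε' := by
  have hκ0 : (0:ℝ) < κ := lt_of_lt_of_le one_pos hκ
  set e := hA.eigenvalues with he
  set U : Matrix (Fin N) (Fin N) ℂ := (hA.eigenvectorUnitary : Matrix (Fin N) (Fin N) ℂ)
    with hUdef
  have hU : U ∈ Matrix.unitaryGroup (Fin N) ℂ := (hA.eigenvectorUnitary).2
  -- eigenvalue bounds
  have habs : ∀ i, 1 / κ ≤ |e i| ∧ |e i| ≤ 1 := by
    intro i
    rcases heig i with h | h
    · rw [abs_of_nonpos (by linarith [h.2, one_div_pos.mpr hκ0] : e i ≤ 0)]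
      constructor <;> [linarith [h.2]; linarith [h.1]]
    · rw [abs_of_nonneg (by linarith [h.1, one_div_pos.mpr hκ0] : 0 ≤ e i)]
      exact h
  have hene : ∀ i, e i ≠ 0 := fun i => by
    have := (habs i).1
    have h0 : 0 < 1 / κ := one_div_pos.mpr hκ0
    intro h; rw [h, abs_zero] at this; linarith
  -- the ideal function
  set f : ℝ → ℝ := fun t => 1 / (2 * κ * t) with hf
  set df : Fin N → ℂ := RCLike.ofReal ∘ f ∘ e with hdf
  set dg : Fin N → ℂ := RCLike.ofReal ∘ g ∘ e with hdg
  have hcfcf : hA.cfc f = U * Matrix.diagonal df * star U := rfl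
  have hcfcg : hA.cfc g = U * Matrix.diagonal dg * star U := rfl
  -- A⁻¹ = (2κ) • cfc f
  have hAinv : A⁻¹ = (2 * κ : ℂ) • hA.cfc f := by
    apply Matrix.inv_eq_right_inv
    rw [mul_smul_comm, hcfcf]
    conv_lhs => rw [hA.spectral_theorem, Unitary.conjStarAlgAut_apply]
    rw [aux_conj_mul U hU _ _]
    rw [← smul_mul_assoc, ← mul_smul_comm, ← Matrix.diagonal_smul]
    have hone : ((2 * κ : ℂ) • fun i => (RCLike.ofReal ∘ e) i * df i) = (1 : Fin N → ℂ) := by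
      funext i
      have hne : 2 * κ * e i ≠ 0 := mul_ne_zero (mul_ne_zero two_ne_zero hκ0.ne') (hene i)
      have hr : (2 * κ) * (e i * f (e i)) = 1 := by
        simp only [hf]
        rw [show (2 * κ) * (e i * (1 / (2 * κ * e i))) = 2 * κ * e i / (2 * κ * e i) from by
          ring, div_self hne]
      simp only [hdf, Function.comp_apply, Pi.smul_apply, smul_eq_mul, Pi.one_apply]
      show (2 * (κ:ℂ)) * (((e i : ℝ) : ℂ) * ((f (e i) : ℝ) : ℂ)) = 1
      exact_mod_cast hr
    rw [hone]
    rw [show (1 : Fin N → ℂ) = fun _ => (1:ℂ) from rfl, Matrix.diagonal_one, mul_one]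
    exact Unitary.mul_star_self_of_mem hU
  -- the two vectors
  set x : EuclideanSpace ℂ (Fin N) := Matrix.toEuclideanLin (hA.cfc f) b with hx
  set y : EuclideanSpace ℂ (Fin N) := Matrix.toEuclideanLin (hA.cfc g) b with hy
  -- lower bound on ‖x‖
  have hxlow : 1 / (2 * κ) ≤ ‖x‖ := by
    have := aux_conj_lower U hU df b (1 / (2 * κ)) (by positivity) (fun i => ?_)
    · rw [hx, hcfcf]; simpa [hb] using this
    · rw [hdf]
      simp only [Function.comp_apply, RCLike.norm_ofReal]
      rw [hf]
      have h1 : |1 / (2 * κ * e i)| = 1 / (2 * κ * |e i|) := by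
        rw [abs_div, abs_one, abs_mul, abs_mul, abs_two, abs_of_pos hκ0]
      rw [h1]
      have h2 : 0 < |e i| := abs_pos.mpr (hene i)
      have h3 : 2 * κ * |e i| ≤ 2 * κ := by nlinarith [(habs i).2]
      exact one_div_le_one_div_of_le (by positivity) h3
  -- bound on ‖x - y‖
  have hdiff : ‖x - y‖ ≤ ε' := by
    have hsub : hA.cfc f - hA.cfc g = U * Matrix.diagonal (df - dg) * star U := by
      rw [hcfcf, hcfcg, show (df - dg) = fun i => df i - dg i from rfl,
        ← Matrix.diagonal_sub, mul_sub, sub_mul]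
    have hxy : x - y = Matrix.toEuclideanLin (hA.cfc f - hA.cfc g) b := by
      rw [hx, hy, map_sub, LinearMap.sub_apply]
    rw [hxy, hsub]
    have := aux_conj_upper U hU (df - dg) b ε' hε'0.le (fun i => ?_)
    · simpa [hb] using this
    · simp only [Pi.sub_apply, hdf, hdg, Function.comp_apply, ← RCLike.ofReal_sub,
        RCLike.norm_ofReal]
      rw [abs_sub_comm]
      simpa [hf] using hg i
  have hx0 : x ≠ 0 := by
    intro h
    rw [h, norm_zero] at hxlow
    have : 0 < 1 / (2 * κ) := by positivity
    linarith
  have hylow : 1 / (2 * κ) - ε' ≤ ‖y‖ := by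
    have := norm_sub_norm_le x y
    linarith
  have hy0 : y ≠ 0 := by
    intro h
    rw [h, norm_zero] at hylow
    linarith
  refine ⟨hy0, ?_⟩
  -- rewrite A⁻¹ b
  have hAb : Matrix.toEuclideanLin A⁻¹ b = (2 * κ : ℂ) • x := by
    rw [hAinv, _root_.map_smul, LinearMap.smul_apply, hx]
  have hnorm_ne : ‖x‖ ≠ 0 := norm_ne_zero_iff.mpr hx0
  have hrw : (‖Matrix.toEuclideanLin A⁻¹ b‖ : ℂ)⁻¹ • Matrix.toEuclideanLin A⁻¹ b
      = (‖x‖ : ℂ)⁻¹ • x := by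
    rw [hAb, smul_smul]
    have hn : ‖(2 * (κ:ℂ)) • x‖ = 2 * κ * ‖x‖ := by
      rw [norm_smul, norm_mul]
      simp [Complex.norm_real, Real.norm_eq_abs, abs_of_pos hκ0, mul_assoc]
    rw [hn]
    congr 1
    have hκc : (κ : ℂ) ≠ 0 := by exact_mod_cast hκ0.ne'
    have hxc : (‖x‖ : ℂ) ≠ 0 := by exact_mod_cast hnorm_ne
    push_cast
    field_simp
  rw [hrw]
  calc ‖(‖x‖ : ℂ)⁻¹ • x - (‖y‖ : ℂ)⁻¹ • y‖ ≤ 2 * ‖x - y‖ / ‖x‖ :=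
        aux_normalize_sub x y hx0 hy0
    _ ≤ 4 * κ * ε' := by
        rw [div_le_iff₀ (norm_pos_iff.mpr hx0)]
        have h4 : 4 * κ * ε' * (1 / (2 * κ)) ≤ 4 * κ * ε' * ‖x‖ :=
          mul_le_mul_of_nonneg_left hxlow (by positivity)
        have h5 : 4 * κ * ε' * (1 / (2 * κ)) = 2 * ε' := by field_simp; ring
        linarith [hdiff]
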